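/- Let α, β > 0 with α < β, let λ : [0,∞) → [0,∞) be a bounded measurable function such that lim_{t→∞} λ(t) = λ∞ exists, and let h : [0,∞) → [0,∞) be a bounded measurable function satisfying the renewal equation h(t) = λ(t) + ∫_0^t α·e^{−β(t−s)}·h(s) ds for all t ≥ 0. Then lim_{t→∞} h(t) = λ∞ / (1 − α/β). -/

import Mathlib

open MeasureTheory Filter

section HawkesAux

open Set

lemma exp_decay_deriv (γ : ℝ) (hγ : 0 < γ) (x : ℝ) :
    HasDerivAt (fun u : ℝ => -Real.exp (-(γ * u)) / γ) (Real.exp (-(γ * x))) x := by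
  have h1 : HasDerivAt (fun u : ℝ => -(γ * u)) (-γ) x := by
    simpa using ((hasDerivAt_id x).const_mul γ).fun_neg
  have h2 := (h1.exp).fun_neg.div_const γ
  convert h2 using 1
  · rfl
  · rfl
  field_simp

lemma exp_decay_tendsto (γ : ℝ) (hγ : 0 < γ) :
    Tendsto (fun u : ℝ => -Real.exp (-(γ * u)) / γ) atTop (nhds 0) := by
  have h0 : Tendsto (fun u : ℝ => γ * u) atTop atTop :=
    tendsto_id (α := ℝ) |>.const_mul_atTop hγ
  have h1 : Tendsto (fun u : ℝ => Real.exp (-(γ * u))) atTop (nhds 0) :=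
    Real.tendsto_exp_neg_atTop_nhds_zero.comp h0
  have := h1.neg.div_const γ
  simpa using this

lemma exp_Ioi_integral (γ : ℝ) (hγ : 0 < γ) :
    ∫ u in Ioi (0:ℝ), Real.exp (-(γ * u)) = 1 / γ := by
  have hint : IntegrableOn (fun u : ℝ => Real.exp (-(γ * u))) (Ioi 0) :=
    (exp_neg_integrableOn_Ioi 0 hγ).congr_fun (fun x _ => by ring_nf) measurableSet_Ioi
  have h := integral_Ioi_of_hasDerivAt_of_tendsto' (a := (0:ℝ))
    (f := fun u => -Real.exp (-(γ * u)) / γ) (f' := fun u => Real.exp (-(γ * u)))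
    (fun x _ => exp_decay_deriv γ hγ x) hint (exp_decay_tendsto γ hγ)
  simpa [neg_div] using h

lemma conv_exp_tendsto {γ c M : ℝ} (hγ : 0 < γ) {f : ℝ → ℝ} (hf : Measurable f)
    (hM : ∀ s, |f s| ≤ M) (hlim : Tendsto f atTop (nhds c)) :
    Tendsto (fun t => ∫ s in (0:ℝ)..t, Real.exp (-(γ * (t - s))) * f s) atTop
      (nhds (c / γ)) := by
  have hM0 : 0 ≤ M := le_trans (abs_nonneg _) (hM 0)
  set Φ : ℝ → ℝ → ℝ := fun t u => (Ioc (0:ℝ) t).indicator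
    (fun u => Real.exp (-(γ * u)) * f (t - u)) u with hΦ
  have key : Tendsto (fun t => ∫ u in Ioi (0:ℝ), Φ t u) atTop
      (nhds (∫ u in Ioi (0:ℝ), Real.exp (-(γ * u)) * c)) := by
    apply tendsto_integral_filter_of_dominated_convergence
      (bound := fun u => M * Real.exp (-(γ * u)))
    · filter_upwards with t
      exact ((((measurable_const.mul measurable_id).neg.exp).mul
        (hf.comp (measurable_const.sub measurable_id))).indicator
        measurableSet_Ioc).aestronglyMeasurable
    · filter_upwards with t
      filter_upwards with u
      by_cases hu : u ∈ Ioc (0:ℝ) t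
      · rw [hΦ]
        simp only [indicator_of_mem hu]
        rw [Real.norm_eq_abs, abs_mul, abs_of_pos (Real.exp_pos _), mul_comm M]
        exact mul_le_mul_of_nonneg_left (hM _) (Real.exp_pos _).le
      · rw [hΦ]
        simp only [indicator_of_notMem hu, norm_zero]
        positivity
    · exact (((exp_neg_integrableOn_Ioi 0 hγ).congr_fun (fun x _ => by ring_nf)
        measurableSet_Ioi)).const_mul M
    · rw [ae_restrict_iff' measurableSet_Ioi]
      filter_upwards with u hu
      have h1 : Tendsto (fun t => f (t - u)) atTop (nhds c) :=
        hlim.comp (tendsto_atTop_add_const_right atTop (-u) tendsto_id)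
      have h2 : Tendsto (fun t => Real.exp (-(γ * u)) * f (t - u)) atTop
          (nhds (Real.exp (-(γ * u)) * c)) := h1.const_mul _
      refine h2.congr' ?_
      filter_upwards [eventually_ge_atTop u] with t ht
      rw [hΦ]
      simp [indicator_of_mem (show u ∈ Ioc (0:ℝ) t from ⟨hu, ht⟩)]
  have hval : (∫ u in Ioi (0:ℝ), Real.exp (-(γ * u)) * c) = c / γ := by
    rw [MeasureTheory.integral_mul_const, exp_Ioi_integral γ hγ]
    ring
  rw [hval] at key
  refine key.congr' ?_
  filter_upwards [eventually_ge_atTop (0:ℝ)] with t ht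
  have e1 : (∫ u in Ioi (0:ℝ), Φ t u)
      = ∫ u in Ioc (0:ℝ) t, Real.exp (-(γ * u)) * f (t - u) := by
    rw [hΦ, setIntegral_indicator measurableSet_Ioc,
      inter_eq_self_of_subset_right Ioc_subset_Ioi_self]
  rw [e1, ← intervalIntegral.integral_of_le ht]
  have e2 := intervalIntegral.integral_comp_sub_left (a := (0:ℝ)) (b := t)
    (fun u => Real.exp (-(γ * u)) * f (t - u)) t
  simp only [sub_self, sub_zero] at e2
  rw [← e2]
  refine intervalIntegral.integral_congr fun s hs => ?_
  simp [sub_sub_cancel]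

end HawkesAux

section HawkesMain

open Set

set_option maxHeartbeats 1000000 in
/-- Renewal theorem for the expected intensity of a Hawkes process with exponential
excitation kernel `μ(t) = α·exp(−βt)`, `0 < α < β`: if the bounded measurable background
intensity `λ` converges to `λ∞` at infinity and the bounded measurable function `h`
solves the renewal equation `h(t) = λ(t) + ∫_0^t α e^{−β(t−s)} h(s) ds` on `[0,∞)`,
then `h(t) → λ∞ / (1 − α/β)` as `t → ∞`. -/

theorem hawkes_expected_intensity_limit
    (α β lamInf : ℝ) (hα : 0 < α) (hαβ : α < β)
    (lam h : ℝ → ℝ)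
    (hlam_meas : Measurable lam)
    (hlam_nonneg : ∀ t, 0 ≤ t → 0 ≤ lam t)
    (hlam_bdd : ∃ M : ℝ, ∀ t, 0 ≤ t → lam t ≤ M)
    (hlam_lim : Tendsto lam atTop (nhds lamInf))
    (hh_meas : Measurable h)
    (hh_nonneg : ∀ t, 0 ≤ t → 0 ≤ h t)
    (hh_bdd : ∃ M : ℝ, ∀ t, 0 ≤ t → h t ≤ M)
    (hrenewal : ∀ t, 0 ≤ t →
      h t = lam t + ∫ s in (0:ℝ)..t, α * Real.exp (-β * (t - s)) * h s) :
    Tendsto h atTop (nhds (lamInf / (1 - α / β))) := by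
  obtain ⟨M1, hM1⟩ := hlam_bdd
  obtain ⟨M2, hM2⟩ := hh_bdd
  have hβ : (0:ℝ) < β := hα.trans hαβ
  have hγ : (0:ℝ) < β - α := sub_pos.2 hαβ
  set lam₀ : ℝ → ℝ := (Ioi (0:ℝ)).indicator lam with hlam₀def
  set h₀ : ℝ → ℝ := (Ioi (0:ℝ)).indicator h with hh₀def
  have hlam₀m : Measurable lam₀ := hlam_meas.indicator measurableSet_Ioi
  have hh₀m : Measurable h₀ := hh_meas.indicator measurableSet_Ioi
  have hlam₀b : ∀ s, |lam₀ s| ≤ max M1 0 := by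
    intro s
    by_cases hs : s ∈ Ioi (0:ℝ)
    · rw [hlam₀def, indicator_of_mem hs, abs_of_nonneg (hlam_nonneg s (le_of_lt hs))]
      exact le_max_of_le_left (hM1 s (le_of_lt hs))
    · rw [hlam₀def, indicator_of_notMem hs]; simp
  have hh₀b : ∀ s, |h₀ s| ≤ max M2 0 := by
    intro s
    by_cases hs : s ∈ Ioi (0:ℝ)
    · rw [hh₀def, indicator_of_mem hs, abs_of_nonneg (hh_nonneg s (le_of_lt hs))]
      exact le_max_of_le_left (hM2 s (le_of_lt hs))
    · rw [hh₀def, indicator_of_notMem hs]; simp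
  have hlam₀lim : Tendsto lam₀ atTop (nhds lamInf) := by
    refine hlam_lim.congr' ?_
    filter_upwards [eventually_gt_atTop (0:ℝ)] with t ht
    exact (indicator_of_mem ht lam).symm
  -- interval integrability of the weighted functions
  have hgInt : ∀ a b : ℝ, IntervalIntegrable (fun s => Real.exp (β * s) * h₀ s) volume a b := by
    intro a b
    refine IntervalIntegrable.mono_fun
      ((Continuous.intervalIntegrable (continuous_const.mul
          (Real.continuous_exp.comp (continuous_const.mul continuous_id))) a b :
        IntervalIntegrable (fun s => max M2 0 * Real.exp (β * s)) volume a b))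
      (((Real.continuous_exp.comp (continuous_const.mul continuous_id)).measurable).mul hh₀m).aestronglyMeasurable ?_
    filter_upwards with s
    simp only [Pi.mul_apply, Function.comp_apply, id_eq]
    rw [Real.norm_eq_abs, Real.norm_eq_abs, abs_mul, abs_of_pos (Real.exp_pos _),
      abs_mul, abs_of_nonneg (le_max_right M2 0), abs_of_pos (Real.exp_pos _), mul_comm (max M2 0)]
    exact mul_le_mul_of_nonneg_left (hh₀b s) (Real.exp_pos _).le
  have hlInt : ∀ a b : ℝ, IntervalIntegrable (fun s => Real.exp (β * s) * lam₀ s) volume a b := by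
    intro a b
    refine IntervalIntegrable.mono_fun
      ((Continuous.intervalIntegrable (continuous_const.mul
          (Real.continuous_exp.comp (continuous_const.mul continuous_id))) a b :
        IntervalIntegrable (fun s => max M1 0 * Real.exp (β * s)) volume a b))
      (((Real.continuous_exp.comp (continuous_const.mul continuous_id)).measurable).mul hlam₀m).aestronglyMeasurable ?_
    filter_upwards with s
    simp only [Pi.mul_apply, Function.comp_apply, id_eq]
    rw [Real.norm_eq_abs, Real.norm_eq_abs, abs_mul, abs_of_pos (Real.exp_pos _),
      abs_mul, abs_of_nonneg (le_max_right M1 0), abs_of_pos (Real.exp_pos _), mul_comm (max M1 0)]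
    exact mul_le_mul_of_nonneg_left (hlam₀b s) (Real.exp_pos _).le
  set G : ℝ → ℝ := fun t => ∫ s in (0:ℝ)..t, Real.exp (β * s) * h₀ s with hGdef
  set L : ℝ → ℝ := fun t => ∫ s in (0:ℝ)..t, Real.exp (β * s) * lam₀ s with hLdef
  have hGcont : Continuous G := intervalIntegral.continuous_primitive hgInt 0
  have hLcont : Continuous L := intervalIntegral.continuous_primitive hlInt 0
  -- renewal equation in terms of G
  have hren₀ : ∀ t, 0 ≤ t → h₀ t = lam₀ t + α * Real.exp (-(β * t)) * G t := by
    intro t ht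
    rcases eq_or_lt_of_le ht with rfl | ht'
    · have h1 : h₀ 0 = 0 := indicator_of_notMem (by simp) h
      have h2 : lam₀ 0 = 0 := indicator_of_notMem (by simp) lam
      have h3 : G 0 = 0 := intervalIntegral.integral_same
      rw [h1, h2, h3]; ring
    · have hmem : t ∈ Ioi (0:ℝ) := ht'
      have hGt : G t = ∫ s in Ioc (0:ℝ) t, Real.exp (β * s) * h₀ s :=
        intervalIntegral.integral_of_le ht
      rw [hh₀def, indicator_of_mem hmem, hlam₀def, indicator_of_mem hmem, hrenewal t ht]
      congr 1
      rw [hGt, intervalIntegral.integral_of_le ht,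
        ← MeasureTheory.integral_const_mul]
      refine setIntegral_congr_fun measurableSet_Ioc fun s hs => ?_
      rw [hh₀def, indicator_of_mem (show s ∈ Ioi (0:ℝ) from hs.1)]
      have : Real.exp (-β * (t - s)) = Real.exp (-(β * t)) * Real.exp (β * s) := by
        rw [← Real.exp_add]; ring_nf
      rw [this]; ring
  -- primitives H and P
  set H : ℝ → ℝ := fun t => ∫ s in (0:ℝ)..t, G s with hHdef
  have hHderiv : ∀ x : ℝ, HasDerivAt H (G x) x := fun x =>
    intervalIntegral.integral_hasDerivAt_right (hGcont.intervalIntegrable _ _)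
      (hGcont.stronglyMeasurableAtFilter volume _) hGcont.continuousAt
  have hPic : Continuous fun s => Real.exp (-(α * s)) * L s :=
    ((Real.continuous_exp.comp (continuous_const.mul continuous_id).neg).mul hLcont)
  set P : ℝ → ℝ := fun t => ∫ s in (0:ℝ)..t, Real.exp (-(α * s)) * L s with hPdef
  have hPderiv : ∀ x : ℝ, HasDerivAt P (Real.exp (-(α * x)) * L x) x := fun x =>
    intervalIntegral.integral_hasDerivAt_right (hPic.intervalIntegrable _ _)
      (hPic.stronglyMeasurableAtFilter volume _) hPic.continuousAt
  have hPcont : Continuous P :=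
    intervalIntegral.continuous_primitive (fun a b => hPic.intervalIntegrable a b) 0
  have hHcont : Continuous H :=
    intervalIntegral.continuous_primitive (fun a b => hGcont.intervalIntegrable a b) 0
  -- Step 1 : G = L + α H on [0,∞)
  have hstep1 : ∀ t, 0 ≤ t → G t = L t + α * H t := by
    intro t ht
    have e1 : G t = ∫ s in Ioc (0:ℝ) t, (Real.exp (β * s) * lam₀ s + α * G s) := by
      rw [show G t = ∫ s in Ioc (0:ℝ) t, Real.exp (β * s) * h₀ s from
        intervalIntegral.integral_of_le ht]
      refine setIntegral_congr_fun measurableSet_Ioc fun s hs => ?_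
      rw [hren₀ s (le_of_lt hs.1), mul_add]
      congr 1
      rw [show Real.exp (β * s) * (α * Real.exp (-(β * s)) * G s)
        = α * (Real.exp (β * s) * Real.exp (-(β * s))) * G s from by ring, ← Real.exp_add]
      simp
    rw [e1, ← intervalIntegral.integral_of_le ht,
      intervalIntegral.integral_add (g := fun s => α * G s) (hlInt 0 t)
        ((continuous_const.mul hGcont : Continuous fun s => α * G s).intervalIntegrable 0 t),
      intervalIntegral.integral_const_mul]
  -- Step 2 : H t = exp (α t) * P t on [0,∞)
  have hstep2 : ∀ t, 0 ≤ t → H t = Real.exp (α * t) * P t := by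
    intro t ht
    set D : ℝ → ℝ := fun u => Real.exp (-(α * u)) * H u - P u with hDdef
    have hDt : D t = D 0 := by
      refine constant_of_has_deriv_right_zero (a := 0) (b := t)
        (((Real.continuous_exp.comp (continuous_const.mul continuous_id).neg).mul
          hHcont).sub hPcont).continuousOn ?_ t ⟨ht, le_rfl⟩
      intro x hx
      have h1 := (((hasDerivAt_id x).const_mul α).fun_neg).exp
      have h2 := (h1.mul (hHderiv x)).sub (hPderiv x)
      have h3 : HasDerivAt D 0 x := by
        convert h2 using 1
        · rfl
        · rfl
        · rfl
        rw [hstep1 x hx.1]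
        simp [Real.exp_ne_zero]
        ring
      exact h3.hasDerivWithinAt
    have hD0 : D 0 = 0 := by
      simp [hDdef, hHdef, hPdef, intervalIntegral.integral_same]
    have hDt0 : Real.exp (-(α * t)) * H t = P t := by
      have := hDt.trans hD0
      rw [hDdef] at this
      simpa [sub_eq_zero] using this
    calc H t = Real.exp (α * t) * (Real.exp (-(α * t)) * H t) := by
          rw [← mul_assoc, ← Real.exp_add]; simp
    _ = Real.exp (α * t) * P t := by rw [hDt0]
  -- the convolution kernel K
  set K : ℝ → ℝ := fun t => Real.exp (-(β * t)) * L t with hKdef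
  have hKcont : Continuous K :=
    (Real.continuous_exp.comp (continuous_const.mul continuous_id).neg).mul hLcont
  have hKeq : ∀ t, 0 ≤ t →
      (∫ s in (0:ℝ)..t, Real.exp (-(β * (t - s))) * lam₀ s) = K t := by
    intro t ht
    show _ = Real.exp (-(β * t)) * L t
    rw [intervalIntegral.integral_of_le ht,
      show L t = ∫ s in Ioc (0:ℝ) t, Real.exp (β * s) * lam₀ s from
        intervalIntegral.integral_of_le ht,
      ← MeasureTheory.integral_const_mul]
    refine setIntegral_congr_fun measurableSet_Ioc fun s hs => ?_
    rw [show Real.exp (-(β * (t - s))) = Real.exp (-(β * t)) * Real.exp (β * s) from by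
      rw [← Real.exp_add]; ring_nf]
    ring
  have hm0 : (0:ℝ) ≤ max M1 0 := le_max_right _ _
  have hKbdd : ∀ u, |K u| ≤ max M1 0 / β := by
    intro u
    rcases le_or_gt 0 u with hu | hu
    · have hLb : |L u| ≤ max M1 0 * ((Real.exp (β * u) - 1) / β) := by
        have hg : IntervalIntegrable (fun s => max M1 0 * Real.exp (β * s)) volume 0 u :=
          Continuous.intervalIntegrable (continuous_const.mul
            (Real.continuous_exp.comp (continuous_const.mul continuous_id))) 0 u
        have hb := intervalIntegral.norm_integral_le_of_norm_le (μ := volume) (a := 0) (b := u)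
            (f := fun s => Real.exp (β * s) * lam₀ s) hu ?_ hg
        · have hcomp : (∫ s in (0:ℝ)..u, max M1 0 * Real.exp (β * s))
              = max M1 0 * ((Real.exp (β * u) - 1) / β) := by
            rw [intervalIntegral.integral_const_mul]
            have : (∫ s in (0:ℝ)..u, Real.exp (β * s))
                = Real.exp (β * u) / β - Real.exp (β * 0) / β := by
              refine intervalIntegral.integral_eq_sub_of_hasDerivAt
                (f := fun s => Real.exp (β * s) / β) (fun x _ => ?_) ?_
              · have := (((hasDerivAt_id x).const_mul β).exp).div_const β
                convert this using 1
                · rfl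
                · rfl
                field_simp
                rfl
              · exact Continuous.intervalIntegrable
                  (Real.continuous_exp.comp (continuous_const.mul continuous_id)) 0 u
            rw [this]
            simp only [mul_zero, Real.exp_zero]
            ring
          rw [hcomp] at hb
          calc |L u| = ‖L u‖ := (Real.norm_eq_abs _).symm
          _ ≤ |max M1 0 * ((Real.exp (β * u) - 1) / β)| := hb.trans (le_abs_self _)
          _ = max M1 0 * ((Real.exp (β * u) - 1) / β) := by
              have h1 : (1:ℝ) ≤ Real.exp (β * u) :=
                Real.one_le_exp (mul_nonneg hβ.le hu)
              rw [abs_of_nonneg (mul_nonneg hm0 (div_nonneg (by linarith) hβ.le))]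
        · filter_upwards with s _
          rw [Real.norm_eq_abs, abs_mul, abs_of_pos (Real.exp_pos _), mul_comm (max M1 0)]
          exact mul_le_mul_of_nonneg_left (hlam₀b s) (Real.exp_pos _).le
      have e0 : (0:ℝ) < Real.exp (-(β * u)) := Real.exp_pos _
      have h1 : Real.exp (-(β * u)) * Real.exp (β * u) = 1 := by
        rw [← Real.exp_add]; simp
      have : |K u| ≤ Real.exp (-(β * u)) * (max M1 0 * ((Real.exp (β * u) - 1) / β)) := by
        rw [hKdef]
        simp only [abs_mul, abs_of_pos e0]
        exact mul_le_mul_of_nonneg_left hLb e0.le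
      refine this.trans ?_
      rw [show Real.exp (-(β * u)) * (max M1 0 * ((Real.exp (β * u) - 1) / β))
        = Real.exp (-(β * u)) * (max M1 0 * (Real.exp (β * u) - 1)) / β from by ring,
        div_le_div_iff_of_pos_right hβ]
      nlinarith [mul_nonneg hm0 e0.le]
    · have hL0 : L u = 0 := by
        rw [show L u = ∫ s in (0:ℝ)..u, Real.exp (β * s) * lam₀ s from rfl,
          intervalIntegral.integral_of_ge hu.le, neg_eq_zero]
        calc (∫ s in Ioc u (0:ℝ), Real.exp (β * s) * lam₀ s)
            = ∫ _s in Ioc u (0:ℝ), (0:ℝ) := by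
              refine setIntegral_congr_fun measurableSet_Ioc fun s hs => ?_
              rw [hlam₀def, indicator_of_notMem (by simpa using hs.2)]
              simp
        _ = 0 := by simp
      rw [hKdef]
      simp only [hL0, mul_zero, abs_zero]
      positivity
  have hKlim : Tendsto K atTop (nhds (lamInf / β)) := by
    refine (conv_exp_tendsto hβ hlam₀m hlam₀b hlam₀lim).congr' ?_
    filter_upwards [eventually_ge_atTop (0:ℝ)] with t ht
    exact hKeq t ht
  have hK2 : Tendsto (fun t => ∫ s in (0:ℝ)..t, Real.exp (-((β - α) * (t - s))) * K s) atTop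
      (nhds (lamInf / β / (β - α))) :=
    conv_exp_tendsto hγ hKcont.measurable hKbdd hKlim
  -- closed formula for h on (0,∞)
  have hfinal : ∀ t, 0 < t → h t = lam₀ t + α * K t +
      α ^ 2 * ∫ s in (0:ℝ)..t, Real.exp (-((β - α) * (t - s))) * K s := by
    intro t ht
    have e0 : h t = h₀ t := (indicator_of_mem ht h).symm
    have eC : (∫ s in (0:ℝ)..t, Real.exp (-((β - α) * (t - s))) * K s)
        = Real.exp (-(β * t)) * Real.exp (α * t) * P t := by
      rw [show Real.exp (-(β * t)) * Real.exp (α * t) = Real.exp (-((β - α) * t)) from by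
          rw [← Real.exp_add]; ring_nf,
        show P t = ∫ s in Ioc (0:ℝ) t, Real.exp (-(α * s)) * L s from
          intervalIntegral.integral_of_le ht.le,
        intervalIntegral.integral_of_le ht.le, ← MeasureTheory.integral_const_mul]
      refine setIntegral_congr_fun measurableSet_Ioc fun s hs => ?_
      rw [hKdef]
      rw [show Real.exp (-((β - α) * (t - s))) * (Real.exp (-(β * s)) * L s)
        = (Real.exp (-((β - α) * (t - s))) * Real.exp (-(β * s))) * L s from by ring,
        ← Real.exp_add,
        show (-((β - α) * (t - s)) + -(β * s)) = (-((β - α) * t) + -(α * s)) from by ring,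
        Real.exp_add]
      ring
    rw [e0, hren₀ t ht.le, hstep1 t ht.le, hstep2 t ht.le, eC, hKdef]
    ring
  -- assemble
  have hsum : Tendsto (fun t => lam₀ t + α * K t +
      α ^ 2 * ∫ s in (0:ℝ)..t, Real.exp (-((β - α) * (t - s))) * K s) atTop
      (nhds (lamInf + α * (lamInf / β) + α ^ 2 * (lamInf / β / (β - α)))) :=
    (hlam₀lim.add (hKlim.const_mul α)).add (hK2.const_mul (α ^ 2))
  have hval : lamInf + α * (lamInf / β) + α ^ 2 * (lamInf / β / (β - α))
      = lamInf / (1 - α / β) := by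
    rw [show (1:ℝ) - α / β = (β - α) / β from by field_simp, div_div_eq_mul_div]
    field_simp
    ring
  rw [← hval]
  refine hsum.congr' ?_
  filter_upwards [eventually_gt_atTop (0:ℝ)] with t ht
  exact (hfinal t ht).symm

end HawkesMain
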